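/- Every CR-set in a commutative semigroup (S,+) is a J-set. -/

import Mathlib

/-- Sum of `f` over a nonempty finite set `α` in a commutative semigroup. -/
def sgSum {ι S : Type*} [LinearOrder ι] [AddCommSemigroup S]
    (α : Finset ι) (f : ι → S) (h : α.Nonempty) : S :=
  ((α.erase (α.min' h)).sort (· ≤ ·)).foldl (fun x i => x + f i) (f (α.min' h))

/-- `A` is a J-set: for every finite set of sequences there are `a` and a
nonempty finite `H ⊆ ℕ` with `a + ∑_{n ∈ H} f n ∈ A` for each `f`. -/
def JSet {S : Type*} [AddCommSemigroup S] (A : Set S) : Prop :=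
  ∀ F : Finset (ℕ → S), ∃ (a : S) (H : Finset ℕ) (hH : H.Nonempty),
    ∀ f ∈ F, a + sgSum H f hH ∈ A

/-- `A` is thick: every finite set can be shifted into `A`. -/
def Thick {S : Type*} [AddCommSemigroup S] (A : Set S) : Prop :=
  ∀ E : Finset S, ∃ x : S, ∀ e ∈ E, e + x ∈ A

/-- `A` is syndetic: finitely many shifts `-t + A` cover `S`. -/
def Syndetic {S : Type*} [AddCommSemigroup S] (A : Set S) : Prop :=
  ∃ F : Finset S, ∀ x : S, ∃ t ∈ F, t + x ∈ A

/-- `A` is piecewise syndetic: finitely many shifts `-t + A` form a thick set. -/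
def PiecewiseSyndetic {S : Type*} [AddCommSemigroup S] (A : Set S) : Prop :=
  ∃ F : Finset S, Thick {x : S | ∃ t ∈ F, t + x ∈ A}

/-- `A` is a combinatorially rich (CR) set. -/
def CRSet {S : Type*} [AddCommSemigroup S] (A : Set S) : Prop :=
  ∀ n : ℕ, ∃ r : ℕ, ∀ M : Fin r → Fin n → S,
    ∃ (α : Finset (Fin r)) (hα : α.Nonempty) (s : S),
      ∀ j : Fin n, s + sgSum α (fun i => M i j) hα ∈ A

/-- `iterAdd a b k = a + b + ⋯ + b` (`k` copies of `b`). -/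
def iterAdd {S : Type*} [AddSemigroup S] (a b : S) : ℕ → S
  | 0 => a
  | k + 1 => iterAdd a b k + b

lemma my_sort_map {ι κ : Type*} [LinearOrder ι] [LinearOrder κ] (e : ι ↪ κ)
    (he : Monotone e) (α : Finset ι) :
    (α.map e).sort (· ≤ ·) = (α.sort (· ≤ ·)).map e := by
  have hp : ((α.map e).sort (· ≤ ·)).Perm ((α.sort (· ≤ ·)).map e) := by
    rw [← Multiset.coe_eq_coe, Finset.sort_eq, Finset.map_val]
    rw [show α.val = ((α.sort (· ≤ ·) : List ι) : Multiset ι) from (Finset.sort_eq _ _).symm,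
      Multiset.map_coe]
  have h2 : List.Pairwise (· ≤ ·) ((α.sort (· ≤ ·)).map e) :=
    List.Pairwise.map e (fun _ _ hab => he hab) (Finset.pairwise_sort _ _)
  exact List.Perm.eq_of_pairwise' (Finset.pairwise_sort _ _) h2 hp

lemma my_min'_map {ι κ : Type*} [LinearOrder ι] [LinearOrder κ] (e : ι ↪ κ)
    (he : Monotone e) (α : Finset ι) (h : α.Nonempty) (h' : (α.map e).Nonempty) :
    (α.map e).min' h' = e (α.min' h) := by
  apply le_antisymm
  · exact Finset.min'_le _ _ (Finset.mem_map_of_mem _ (α.min'_mem h))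
  · exact Finset.le_min' _ _ _ fun y hy => by
      obtain ⟨x, hx, rfl⟩ := Finset.mem_map.mp hy
      exact he (α.min'_le x hx)

lemma my_sgSum_map {ι κ S : Type*} [LinearOrder ι] [LinearOrder κ] [AddCommSemigroup S]
    (e : ι ↪ κ) (he : Monotone e) (α : Finset ι) (h : α.Nonempty)
    (h' : (α.map e).Nonempty) (f : κ → S) :
    sgSum (α.map e) f h' = sgSum α (fun i => f (e i)) h := by
  unfold sgSum
  rw [my_min'_map e he α h h', ← Finset.map_erase, my_sort_map e he, List.foldl_map]

/-- Every CR-set in a commutative semigroup is a J-set. -/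
theorem cRSet_isJSet {S : Type*} [AddCommSemigroup S] (A : Set S)
    (hA : CRSet A) : JSet A := by
  intro F
  obtain ⟨r, hr⟩ := hA F.card
  set g : Fin F.card → (ℕ → S) := fun j => (F.equivFin.symm j : ℕ → S) with hg
  obtain ⟨α, hα, s, hs⟩ := hr (fun i j => g j i.val)
  have hH : (α.map Fin.valEmbedding).Nonempty := hα.map
  refine ⟨s, α.map Fin.valEmbedding, hH, fun f hf => ?_⟩
  have hmono : Monotone (Fin.valEmbedding : Fin r ↪ ℕ) := fun a b hab => hab
  rw [my_sgSum_map Fin.valEmbedding hmono α hα hH f]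
  have hj := hs (F.equivFin ⟨f, hf⟩)
  simpa [hg, Equiv.symm_apply_apply] using hj
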